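/- Enumeration reducibility embeds into s-reducibility via finite subsets: for all sets A, B ⊆ ℕ, A ≤_e B if and only if A* ≤_s B*, where for any set X ⊆ ℕ, X* denotes the set of canonical indices of all finite subsets of X. -/

import Mathlib

/-- A set `S ⊆ ℕ` is computably enumerable (c.e.) if it is the domain of a
partial computable function. -/
def CE (S : Set ℕ) : Prop := ∃ f : ℕ →. ℕ, Partrec f ∧ S = f.Dom

/-- Application of an operator, given as a set `Φ ⊆ ℕ` of coded axioms
`⟨x, F⟩` (coded via `Nat.pair` and the canonical index `Encodable.encode F`
of the finite set `F`), to a set `X`: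
`Φ(X) = {x : ∃ F, ⟨x, F⟩ ∈ Φ and F ⊆ X}`. -/
def evalOp (Φ : Set ℕ) (X : Set ℕ) : Set ℕ :=
  {x | ∃ F : Finset ℕ, Nat.pair x (Encodable.encode F) ∈ Φ ∧ ↑F ⊆ X}

/-- `Φ` is an s-operator: a c.e. set of axioms `⟨x, F⟩` where each `F` is
empty or a singleton. -/
def IsSOp (Φ : Set ℕ) : Prop :=
  CE Φ ∧ ∀ (x : ℕ) (F : Finset ℕ), Nat.pair x (Encodable.encode F) ∈ Φ → F.card ≤ 1

/-- `A` is s-reducible to `B`. -/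
def SRed (A B : Set ℕ) : Prop := ∃ Φ : Set ℕ, IsSOp Φ ∧ A = evalOp Φ B
/-- `A` is enumeration reducible to `B`: witnessed by a c.e. set of axioms
`⟨x, F⟩` with `F` an arbitrary finite set. -/
def ERed (A B : Set ℕ) : Prop := ∃ Φ : Set ℕ, CE Φ ∧ A = evalOp Φ B

/-- `X*` is the set of canonical indices of finite subsets of `X`. -/
def finStar (X : Set ℕ) : Set ℕ :=
  {n | ∃ F : Finset ℕ, n = Encodable.encode F ∧ ↑F ⊆ X}

open Encodable Denumerable

namespace Stmt8Aux

/-! ### Encoding lemmas -/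

lemma encode_finset_eq_encode_sort (F : Finset ℕ) :
    Encodable.encode F = Encodable.encode (F.sort (· ≤ ·)) := by
  show encodeMultiset F.1 = _
  unfold encodeMultiset
  congr 1

lemma ofNat_encode_finset (F : Finset ℕ) :
    Denumerable.ofNat (List ℕ) (Encodable.encode F) = F.sort (· ≤ ·) := by
  rw [encode_finset_eq_encode_sort, Denumerable.ofNat_encode]

lemma encode_toFinset {l : List ℕ} (hl : l.Pairwise (· < ·)) :
    Encodable.encode l.toFinset = Encodable.encode l := by
  rw [encode_finset_eq_encode_sort,
    (List.toFinset_sort (· ≤ ·) hl.nodup).2 (hl.imp le_of_lt)]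

lemma encode_singleton (x : ℕ) :
    Encodable.encode ({x} : Finset ℕ) = Encodable.encode [x] := by
  rw [encode_finset_eq_encode_sort, Finset.sort_singleton]

lemma encode_empty :
    Encodable.encode (∅ : Finset ℕ) = Encodable.encode ([] : List ℕ) := by
  rw [encode_finset_eq_encode_sort, Finset.sort_empty]

/-! ### Boolean sortedness -/

/-- Boolean sortedness (strict) check. -/
def sortedb : List ℕ → Bool
  | [] => true
  | a :: l => (l.all fun b => decide (a < b)) && sortedb l

lemma sortedb_iff {l : List ℕ} : sortedb l = true ↔ l.Pairwise (· < ·) := by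
  induction l with
  | nil => simp [sortedb]
  | cons a l ih => simp [sortedb, List.pairwise_cons, ih, and_comm]

lemma sortedb_sort (F : Finset ℕ) : sortedb (F.sort (· ≤ ·)) = true :=
  sortedb_iff.2 (Finset.sortedLT_sort F).pairwise

/-! ### Primrec combinators -/

lemma primrec_list_all {α β : Type} [Primcodable α] [Primcodable β]
    {f : α → List β} {p : α → β → Bool} (hf : Primrec f) (hp : Primrec₂ p) :
    Primrec fun a => (f a).all (p a) := by
  have : Primrec fun a => (f a).foldr (fun b r => p a b && r) true :=
    Primrec.list_foldr hf (Primrec.const true)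
      (Primrec₂.comp (Primrec.dom_bool₂ (· && ·))
        (hp.comp Primrec.fst (Primrec.fst.comp Primrec.snd))
        (Primrec.snd.comp Primrec.snd)).to₂
  refine this.of_eq fun a => ?_
  induction f a with
  | nil => simp
  | cons b l ih => simp [List.all_cons, ih]

lemma primrec_list_any {α β : Type} [Primcodable α] [Primcodable β]
    {f : α → List β} {p : α → β → Bool} (hf : Primrec f) (hp : Primrec₂ p) :
    Primrec fun a => (f a).any (p a) := by
  have : Primrec fun a => (f a).foldr (fun b r => p a b || r) false :=
    Primrec.list_foldr hf (Primrec.const false)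
      (Primrec₂.comp (Primrec.dom_bool₂ (· || ·))
        (hp.comp Primrec.fst (Primrec.fst.comp Primrec.snd))
        (Primrec.snd.comp Primrec.snd)).to₂
  refine this.of_eq fun a => ?_
  induction f a with
  | nil => simp
  | cons b l ih => simp [List.any_cons, ih]

lemma primrec_sortedb : Primrec sortedb := by
  have hh : Primrec₂ fun (_ : List ℕ) (q : ℕ × List ℕ × Bool) =>
      (q.2.1.all fun b => decide (q.1 < b)) && q.2.2 := by
    have hall : Primrec fun q : List ℕ × ℕ × List ℕ × Bool =>
        (q.2.2.1.all fun b => decide (q.2.1 < b)) :=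
      primrec_list_all (Primrec.fst.comp (Primrec.snd.comp Primrec.snd))
        (PrimrecPred.decide (Primrec.nat_lt.comp (Primrec.fst.comp (Primrec.snd.comp Primrec.fst))
          Primrec.snd))
    exact (Primrec₂.comp (Primrec.dom_bool₂ (· && ·)) hall
      (Primrec.snd.comp (Primrec.snd.comp Primrec.snd))).to₂
  have h := Primrec.list_rec (Primrec.id (α := List ℕ)) (Primrec.const true) hh
  refine h.of_eq fun l => ?_
  induction l with
  | nil => rfl
  | cons a l ih => simp [sortedb, ← ih]

/-! ### CE via primitive recursive approximations -/

lemma ce_to_approx {S : Set ℕ} (h : CE S) :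
    ∃ p : ℕ → ℕ → Bool, Primrec₂ p ∧
      (∀ y k k', k ≤ k' → p y k = true → p y k' = true) ∧
      ∀ y, y ∈ S ↔ ∃ k, p y k = true := by
  obtain ⟨f, pf, rfl⟩ := h
  obtain ⟨c, hc⟩ := Nat.Partrec.Code.exists_code.1 (Partrec.nat_iff.1 pf)
  refine ⟨fun y k => (Nat.Partrec.Code.evaln k c y).isSome, ?_, ?_, ?_⟩
  · exact (Primrec.option_isSome.comp
      (Nat.Partrec.Code.primrec_evaln.comp
        ((Primrec.snd.pair (Primrec.const c)).pair Primrec.fst))).to₂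
  · intro y k k' hk h1
    obtain ⟨x, hx⟩ := Option.isSome_iff_exists.1 h1
    exact Option.isSome_iff_exists.2 ⟨x, Nat.Partrec.Code.evaln_mono hk hx⟩
  · intro y
    rw [← hc]
    show (Nat.Partrec.Code.eval c y).Dom ↔ _
    rw [Part.dom_iff_mem]
    constructor
    · rintro ⟨x, hx⟩
      obtain ⟨k, hk⟩ := Nat.Partrec.Code.evaln_complete.1 hx
      exact ⟨k, Option.isSome_iff_exists.2 ⟨x, hk⟩⟩
    · rintro ⟨k, hk⟩
      obtain ⟨x, hx⟩ := Option.isSome_iff_exists.1 hk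
      exact ⟨x, Nat.Partrec.Code.evaln_complete.2 ⟨k, hx⟩⟩

lemma approx_to_ce {S : Set ℕ} {p : ℕ → ℕ → Bool} (hp : Primrec₂ p)
    (hS : ∀ y, y ∈ S ↔ ∃ k, p y k = true) : CE S := by
  refine ⟨fun y => Nat.rfind (fun k => Part.some (p y k)), ?_, ?_⟩
  · exact Partrec.rfind (hp.to_comp.partrec₂)
  · ext y
    rw [hS y]
    show _ ↔ (Nat.rfind _).Dom
    refine Iff.trans ?_ (Nat.rfind_dom (p := fun k => Part.some (p y k))).symm
    constructor
    · rintro ⟨k, hk⟩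
      exact ⟨k, Part.mem_some_iff.2 hk.symm, fun {m} _ => trivial⟩
    · rintro ⟨k, hk, -⟩
      exact ⟨k, (Part.mem_some_iff.1 hk).symm⟩

/-! ### The s-operator for the forward direction -/

/-- Membership approximation for the constructed s-operator `Ψ`. -/
def qF (p : ℕ → ℕ → Bool) (y k : ℕ) : Bool :=
  ((decide (Denumerable.ofNat (List ℕ) y.unpair.2 =
      [(Denumerable.ofNat (List ℕ) y.unpair.2).headI])) &&
    sortedb (Denumerable.ofNat (List ℕ) y.unpair.1)) &&
  ((Denumerable.ofNat (List ℕ) y.unpair.1).all fun x =>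
    (Denumerable.ofNat (List ℕ) k.unpair.2).any fun m =>
      ((sortedb (Denumerable.ofNat (List ℕ) m)) &&
        ((Denumerable.ofNat (List ℕ) m).all fun a =>
          (Denumerable.ofNat (List ℕ)
            (Denumerable.ofNat (List ℕ) y.unpair.2).headI).any fun b =>
              decide (a = b))) &&
      p (Nat.pair x m) k.unpair.1)

set_option maxHeartbeats 2000000 in
lemma primrec_qF {p : ℕ → ℕ → Bool} (hp : Primrec₂ p) : Primrec₂ (qF p) := by
  have hLs : Primrec fun a : ℕ × ℕ => Denumerable.ofNat (List ℕ) a.1.unpair.2 :=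
    (Primrec.ofNat _).comp (Primrec.snd.comp (Primrec.unpair.comp Primrec.fst))
  have hLg : Primrec fun a : ℕ × ℕ => Denumerable.ofNat (List ℕ) a.1.unpair.1 :=
    (Primrec.ofNat _).comp (Primrec.fst.comp (Primrec.unpair.comp Primrec.fst))
  have hhead : Primrec fun a : ℕ × ℕ =>
      (Denumerable.ofNat (List ℕ) a.1.unpair.2).headI :=
    Primrec.list_headI.comp hLs
  have hc1 : Primrec fun a : ℕ × ℕ =>
      decide (Denumerable.ofNat (List ℕ) a.1.unpair.2 =
        [(Denumerable.ofNat (List ℕ) a.1.unpair.2).headI]) :=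
    (Primrec.eq.comp hLs (Primrec.list_cons.comp hhead (Primrec.const []))).decide
  have hc2 : Primrec fun a : ℕ × ℕ =>
      sortedb (Denumerable.ofNat (List ℕ) a.1.unpair.1) :=
    primrec_sortedb.comp hLg
  -- the big conjunct
  have hinner : Primrec₂ fun (b : (ℕ × ℕ) × ℕ) (m : ℕ) =>
      ((sortedb (Denumerable.ofNat (List ℕ) m)) &&
        ((Denumerable.ofNat (List ℕ) m).all fun a =>
          (Denumerable.ofNat (List ℕ)
            (Denumerable.ofNat (List ℕ) b.1.1.unpair.2).headI).any fun c =>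
              decide (a = c))) &&
      p (Nat.pair b.2 m) b.1.2.unpair.1 := by
    have hOm : Primrec fun e : ((ℕ × ℕ) × ℕ) × ℕ => Denumerable.ofNat (List ℕ) e.2 :=
      (Primrec.ofNat _).comp Primrec.snd
    have t1 : Primrec fun e : ((ℕ × ℕ) × ℕ) × ℕ =>
        sortedb (Denumerable.ofNat (List ℕ) e.2) := primrec_sortedb.comp hOm
    have hLf : Primrec fun w : (((ℕ × ℕ) × ℕ) × ℕ) × ℕ =>
        Denumerable.ofNat (List ℕ)
          (Denumerable.ofNat (List ℕ) w.1.1.1.1.unpair.2).headI :=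
      (Primrec.ofNat _).comp (Primrec.list_headI.comp ((Primrec.ofNat _).comp
        (Primrec.snd.comp (Primrec.unpair.comp
          (Primrec.fst.comp (Primrec.fst.comp (Primrec.fst.comp Primrec.fst)))))))
    have t2 : Primrec fun e : ((ℕ × ℕ) × ℕ) × ℕ =>
        (Denumerable.ofNat (List ℕ) e.2).all fun a =>
          (Denumerable.ofNat (List ℕ)
            (Denumerable.ofNat (List ℕ) e.1.1.1.unpair.2).headI).any fun c =>
              decide (a = c) := by
      refine primrec_list_all hOm ?_
      exact (primrec_list_any
        (p := fun (w : (((ℕ × ℕ) × ℕ) × ℕ) × ℕ) c => decide (w.2 = c)) hLf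
        (PrimrecPred.decide (Primrec.eq.comp (Primrec.snd.comp Primrec.fst) Primrec.snd))).to₂
    have t3 : Primrec fun e : ((ℕ × ℕ) × ℕ) × ℕ =>
        p (Nat.pair e.1.2 e.2) e.1.1.2.unpair.1 :=
      hp.comp (Primrec₂.natPair.comp (Primrec.snd.comp Primrec.fst) Primrec.snd)
        (Primrec.fst.comp (Primrec.unpair.comp
          (Primrec.snd.comp (Primrec.fst.comp Primrec.fst))))
    exact ((Primrec.dom_bool₂ (· && ·)).comp
      ((Primrec.dom_bool₂ (· && ·)).comp t1 t2) t3).to₂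
  have hbig : Primrec fun a : ℕ × ℕ =>
      (Denumerable.ofNat (List ℕ) a.1.unpair.1).all fun x =>
        (Denumerable.ofNat (List ℕ) a.2.unpair.2).any fun m =>
          ((sortedb (Denumerable.ofNat (List ℕ) m)) &&
            ((Denumerable.ofNat (List ℕ) m).all fun c =>
              (Denumerable.ofNat (List ℕ)
                (Denumerable.ofNat (List ℕ) a.1.unpair.2).headI).any fun d =>
                  decide (c = d))) &&
          p (Nat.pair x m) a.2.unpair.1 := by
    refine primrec_list_all hLg ?_
    exact (primrec_list_any
      (p := fun (b : (ℕ × ℕ) × ℕ) (m : ℕ) =>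
        ((sortedb (Denumerable.ofNat (List ℕ) m)) &&
          ((Denumerable.ofNat (List ℕ) m).all fun c =>
            (Denumerable.ofNat (List ℕ)
              (Denumerable.ofNat (List ℕ) b.1.1.unpair.2).headI).any fun d =>
                decide (c = d))) &&
        p (Nat.pair b.2 m) b.1.2.unpair.1)
      ((Primrec.ofNat _).comp
        (Primrec.snd.comp (Primrec.unpair.comp (Primrec.snd.comp Primrec.fst)))) hinner).to₂
  exact ((Primrec.dom_bool₂ (· && ·)).comp
    ((Primrec.dom_bool₂ (· && ·)).comp hc1 hc2) hbig).to₂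

/-! ### The e-operator for the reverse direction -/

def qR (p : ℕ → ℕ → Bool) (y k : ℕ) : Bool :=
  p (Nat.pair (Encodable.encode [y.unpair.1]) (Encodable.encode ([] : List ℕ))) k ||
  p (Nat.pair (Encodable.encode [y.unpair.1]) (Encodable.encode [y.unpair.2])) k

lemma primrec_qR {p : ℕ → ℕ → Bool} (hp : Primrec₂ p) : Primrec₂ (qR p) := by
  have hx : Primrec fun a : ℕ × ℕ => Encodable.encode [a.1.unpair.1] :=
    Primrec.encode.comp (Primrec.list_cons.comp
      (Primrec.fst.comp (Primrec.unpair.comp Primrec.fst)) (Primrec.const []))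
  have hm : Primrec fun a : ℕ × ℕ => Encodable.encode [a.1.unpair.2] :=
    Primrec.encode.comp (Primrec.list_cons.comp
      (Primrec.snd.comp (Primrec.unpair.comp Primrec.fst)) (Primrec.const []))
  have h1 : Primrec fun a : ℕ × ℕ =>
      p (Nat.pair (Encodable.encode [a.1.unpair.1])
        (Encodable.encode ([] : List ℕ))) a.2 :=
    hp.comp (Primrec₂.natPair.comp hx
      (Primrec.const (Encodable.encode ([] : List ℕ)))) Primrec.snd
  have h2 : Primrec fun a : ℕ × ℕ =>
      p (Nat.pair (Encodable.encode [a.1.unpair.1])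
        (Encodable.encode [a.1.unpair.2])) a.2 :=
    hp.comp (Primrec₂.natPair.comp hx hm) Primrec.snd
  exact ((Primrec.dom_bool₂ (· || ·)).comp h1 h2).to₂

/-! ### Reverse direction: `A* ≤ₛ B*` implies `A ≤ₑ B` -/

lemma reverse {A B : Set ℕ} (h : SRed (finStar A) (finStar B)) : ERed A B := by
  obtain ⟨Ψ, ⟨hCE, hcard⟩, hEq⟩ := h
  obtain ⟨p, hp, -, hmem⟩ := ce_to_approx hCE
  refine ⟨{y | ∃ k, qR p y k = true}, approx_to_ce (primrec_qR hp) (fun y => Iff.rfl), ?_⟩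
  ext x
  have key : ∀ S : Finset ℕ,
      Nat.pair (Encodable.encode ({x} : Finset ℕ)) (Encodable.encode S) ∈ Ψ →
      ↑S ⊆ finStar B → x ∈ A := by
    intro S haxS hSB
    have hmem' : Encodable.encode ({x} : Finset ℕ) ∈ evalOp Ψ (finStar B) :=
      ⟨S, haxS, hSB⟩
    rw [← hEq] at hmem'
    obtain ⟨G, hG, hGA⟩ := hmem'
    have hGx : ({x} : Finset ℕ) = G := Encodable.encode_injective hG
    exact hGA (by rw [← hGx]; simp)
  constructor
  · -- x ∈ A → x ∈ evalOp Φ B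
    intro hx
    have hxA : Encodable.encode ({x} : Finset ℕ) ∈ finStar A :=
      ⟨{x}, rfl, by simpa using hx⟩
    rw [hEq] at hxA
    obtain ⟨S, hax, hSB⟩ := hxA
    have hS1 : S.card ≤ 1 := hcard _ _ hax
    rcases S.eq_empty_or_nonempty with rfl | ⟨b, hb⟩
    · obtain ⟨k, hk⟩ := (hmem _).1 hax
      refine ⟨∅, ⟨k, ?_⟩, by simp⟩
      simp only [qR, Nat.unpair_pair, Bool.or_eq_true]
      left
      rw [← encode_singleton, ← encode_empty]
      exact hk
    · have hSb : S = {b} := by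
        apply Finset.eq_singleton_iff_unique_mem.2
        exact ⟨hb, fun a ha => Finset.card_le_one.1 hS1 a ha b hb⟩
      subst hSb
      obtain ⟨F₀, hbe, hFB⟩ := hSB (by simp : b ∈ (↑({b} : Finset ℕ) : Set ℕ))
      subst hbe
      obtain ⟨k, hk⟩ := (hmem _).1 hax
      refine ⟨F₀, ⟨k, ?_⟩, hFB⟩
      simp only [qR, Nat.unpair_pair, Bool.or_eq_true]
      right
      rw [← encode_singleton, ← encode_singleton]
      exact hk
  · rintro ⟨F, ⟨k, hq⟩, hFB⟩
    simp only [qR, Nat.unpair_pair, Bool.or_eq_true] at hq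
    rcases hq with h1 | h2
    · refine key ∅ ((hmem _).2 ⟨k, ?_⟩) (by simp)
      rw [encode_singleton, encode_empty]
      exact h1
    · refine key {Encodable.encode F} ((hmem _).2 ⟨k, ?_⟩) ?_
      · rw [encode_singleton, encode_singleton]
        exact h2
      · intro a ha
        simp only [Finset.coe_singleton, Set.mem_singleton_iff] at ha
        subst ha
        exact ⟨F, rfl, hFB⟩

/-! ### Forward direction: `A ≤ₑ B` implies `A* ≤ₛ B*` -/

lemma forward {A B : Set ℕ} (h : ERed A B) : SRed (finStar A) (finStar B) := by
  obtain ⟨Φ, hCE, hA⟩ := h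
  obtain ⟨p, hp, hmono, hmem⟩ := ce_to_approx hCE
  refine ⟨{y | ∃ k, qF p y k = true},
    ⟨approx_to_ce (primrec_qF hp) (fun y => Iff.rfl), ?_⟩, ?_⟩
  · -- s-operator: second components are singletons
    intro x F hxF
    obtain ⟨k, hq⟩ := hxF
    simp only [qF, Nat.unpair_pair, Bool.and_eq_true, decide_eq_true_eq] at hq
    obtain ⟨⟨h1, -⟩, -⟩ := hq
    rw [ofNat_encode_finset] at h1
    have hc : F.card = 1 := by
      rw [← Finset.length_sort (· ≤ ·), h1]
      rfl
    omega
  · -- evalOp equality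
    ext z
    constructor
    · -- completeness
      rintro ⟨G, rfl, hGA⟩
      have hch : ∀ x ∈ G, ∃ Fx : Finset ℕ,
          Nat.pair x (Encodable.encode Fx) ∈ Φ ∧ ↑Fx ⊆ B := by
        intro x hx
        have hxA : x ∈ A := hGA (Finset.mem_coe.2 hx)
        rw [hA] at hxA
        exact hxA
      choose! w hw1 hw2 using hch
      have hkx : ∀ x ∈ G, ∃ k, p (Nat.pair x (Encodable.encode (w x))) k = true :=
        fun x hx => (hmem _).1 (hw1 x hx)
      choose! κ hκ using hkx
      refine ⟨{Encodable.encode (G.biUnion w)},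
        ⟨Nat.pair (G.sup κ)
          (Encodable.encode ((G.sort (· ≤ ·)).map fun x => Encodable.encode (w x))), ?_⟩, ?_⟩
      · simp only [qF, Nat.unpair_pair, ofNat_encode_finset, Finset.sort_singleton,
          List.headI, Denumerable.ofNat_encode, Bool.and_eq_true, decide_eq_true_eq,
          List.all_eq_true, List.any_eq_true]
        refine ⟨⟨trivial, sortedb_sort G⟩, ?_⟩
        intro x hx
        have hxG : x ∈ G := (Finset.mem_sort (· ≤ ·)).1 hx
        refine ⟨Encodable.encode (w x), List.mem_map.2 ⟨x, hx, rfl⟩, ⟨⟨?_, ?_⟩, ?_⟩⟩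
        · rw [ofNat_encode_finset]
          exact sortedb_sort (w x)
        · rw [ofNat_encode_finset]
          intro a ha
          refine ⟨a, ?_, rfl⟩
          apply (Finset.mem_sort (· ≤ ·)).2
          exact Finset.mem_biUnion.2 ⟨x, hxG, (Finset.mem_sort (· ≤ ·)).1 ha⟩
        · exact hmono _ (κ x) (G.sup κ) (Finset.le_sup hxG) (hκ x hxG)
      · intro a ha
        simp only [Finset.coe_singleton, Set.mem_singleton_iff] at ha
        subst ha
        refine ⟨G.biUnion w, rfl, ?_⟩
        intro c hc
        obtain ⟨x, hxG, hcx⟩ := Finset.mem_biUnion.1 (Finset.mem_coe.1 hc)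
        exact hw2 x hxG (Finset.mem_coe.2 hcx)

    · -- soundness
      rintro ⟨S, ⟨k, hq⟩, hSB⟩
      simp only [qF, Nat.unpair_pair, Bool.and_eq_true, decide_eq_true_eq,
        List.all_eq_true, List.any_eq_true] at hq
      obtain ⟨⟨h1, h2⟩, h3⟩ := hq
      rw [ofNat_encode_finset] at h1 h3
      have hfS : (S.sort (· ≤ ·)).headI ∈ S := by
        apply (Finset.mem_sort (· ≤ ·)).1
        rw [h1]
        exact List.mem_singleton_self _
      obtain ⟨F₀, hfe, hFB⟩ := hSB (Finset.mem_coe.2 hfS)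
      have hLg : (Denumerable.ofNat (List ℕ) z).Pairwise (· < ·) := sortedb_iff.1 h2
      refine ⟨(Denumerable.ofNat (List ℕ) z).toFinset, ?_, ?_⟩
      · rw [encode_toFinset hLg, Denumerable.encode_ofNat]
      · intro a ha
        simp only [Finset.coe_sort_coe, List.coe_toFinset, Set.mem_setOf_eq] at ha
        obtain ⟨m, hmM, ⟨⟨hms, hsub⟩, hpm⟩⟩ := h3 a ha
        rw [hA]
        refine ⟨(Denumerable.ofNat (List ℕ) m).toFinset, ?_, ?_⟩
        · rw [encode_toFinset (sortedb_iff.1 hms), Denumerable.encode_ofNat]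
          exact (hmem _).2 ⟨k.unpair.1, hpm⟩
        · intro c hc
          simp only [Finset.coe_sort_coe, List.coe_toFinset, Set.mem_setOf_eq] at hc
          obtain ⟨d, hd, hcd⟩ := hsub c hc
          subst hcd
          rw [hfe, ofNat_encode_finset] at hd
          exact hFB (Finset.mem_coe.2 ((Finset.mem_sort (· ≤ ·)).1 hd))
end Stmt8Aux

/-- Enumeration reducibility embeds into s-reducibility via finite subsets:
`A ≤ₑ B ↔ A* ≤ₛ B*`. -/
theorem stmt8 : ∀ A B : Set ℕ, ERed A B ↔ SRed (finStar A) (finStar B) :=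
  fun _ _ => ⟨Stmt8Aux.forward, Stmt8Aux.reverse⟩
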